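/- Correctness of the proposal distribution in the neighborhood-sampling algorithm: let s be a connected induced (k−1)-subgraph of G with total degree d_s = Σ_{w∈V(s)} deg_G(w). Sample u ∈ V(s) with probability proportional to d_s − deg_G(u), then a ∈ V(s)\{u} with probability proportional to deg_G(a), then v uniformly from N_G(a). Then the probability of producing a pair (u,v) is proportional to |N_G(v) ∩ (V(s)\{u})|; consequently, accepting (u,v) with probability 1/|N_G(v) ∩ (V(s)\{u})| yields a uniform distribution over pairs (u,v) ∈ V(s) × N_G(V(s)) with v adjacent to V(s)\{u}. -/

import Mathlib

open Finset

/-- correctness of the proposal distribution in the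
neighborhood-sampling algorithm: let `s` be a connected induced
`(k−1)`-subgraph of `G` with total degree `d_s = ∑_{w∈V(s)} deg(w)`.  Sampling
`u ∈ V(s)` with probability `∝ d_s − deg(u)`, then `a ∈ V(s)\{u}` with
probability `∝ deg(a)`, then `v` uniformly from `N(a)` produces the pair `(u,v)`
with probability `P(u,v) = |N(v) ∩ (V(s)\{u})| / ((k−2)·d_s)`, i.e. proportional
to `|N(v) ∩ (V(s)\{u})|`; consequently, accepting with probability
`1/|N(v) ∩ (V(s)\{u})|` yields the uniform value `1/((k−2)·d_s)` for every valid
pair. -/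
theorem proposal_distribution_correct {V : Type*} [Fintype V] [DecidableEq V]
    (G : SimpleGraph V) [DecidableRel G.Adj] (s : Finset V) (k : ℕ)
    (hk : 3 ≤ k) (hcard : s.card = k - 1)
    (hdeg : ∀ w ∈ s, 0 < G.degree w)
    (hconn : (G.induce (s : Set V)).Connected) :
    (∀ u ∈ s, ∀ v : V,
      (∑ a ∈ s.erase u,
          if G.Adj a v then
            ((G.degree a : ℝ))⁻¹
              * ((G.degree a : ℝ) / ((∑ w ∈ s, (G.degree w : ℝ)) - (G.degree u : ℝ)))
              * (((∑ w ∈ s, (G.degree w : ℝ)) - (G.degree u : ℝ))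
                  / (((k : ℝ) - 2) * ∑ w ∈ s, (G.degree w : ℝ)))
          else 0)
        = ((G.neighborFinset v ∩ s.erase u).card : ℝ)
            / (((k : ℝ) - 2) * ∑ w ∈ s, (G.degree w : ℝ)))
    ∧ (∀ u ∈ s, ∀ v : V, 0 < (G.neighborFinset v ∩ s.erase u).card →
        (∑ a ∈ s.erase u,
            if G.Adj a v then
              ((G.degree a : ℝ))⁻¹
                * ((G.degree a : ℝ) / ((∑ w ∈ s, (G.degree w : ℝ)) - (G.degree u : ℝ)))
                * (((∑ w ∈ s, (G.degree w : ℝ)) - (G.degree u : ℝ))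
                    / (((k : ℝ) - 2) * ∑ w ∈ s, (G.degree w : ℝ)))
            else 0)
          * (((G.neighborFinset v ∩ s.erase u).card : ℝ))⁻¹
          = 1 / (((k : ℝ) - 2) * ∑ w ∈ s, (G.degree w : ℝ))) := by

  have hk2 : (1:ℝ) ≤ (k:ℝ) - 2 := by
    have : (3:ℝ) ≤ (k:ℝ) := by exact_mod_cast hk
    linarith
  have hP : ∀ u ∈ s, ∀ v : V,
      (∑ a ∈ s.erase u,
          if G.Adj a v then
            ((G.degree a : ℝ))⁻¹
              * ((G.degree a : ℝ) / ((∑ w ∈ s, (G.degree w : ℝ)) - (G.degree u : ℝ)))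
              * (((∑ w ∈ s, (G.degree w : ℝ)) - (G.degree u : ℝ))
                  / (((k : ℝ) - 2) * ∑ w ∈ s, (G.degree w : ℝ)))
          else 0)
        = ((G.neighborFinset v ∩ s.erase u).card : ℝ)
            / (((k : ℝ) - 2) * ∑ w ∈ s, (G.degree w : ℝ)) := by
    intro u hu v
    set D : ℝ := ∑ w ∈ s, (G.degree w : ℝ) with hD
    have hDu : D - (G.degree u : ℝ) = ∑ w ∈ s.erase u, (G.degree w : ℝ) := by
      rw [hD, ← Finset.add_sum_erase s _ hu]; ring
    have herase_ne : (s.erase u).Nonempty := by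
      have h2 : 2 ≤ s.card := by omega
      rw [← Finset.card_pos, Finset.card_erase_of_mem hu]; omega
    have hDupos : 0 < D - (G.degree u : ℝ) := by
      rw [hDu]
      apply Finset.sum_pos
      · intro w hw
        exact_mod_cast hdeg w (Finset.mem_of_mem_erase hw)
      · exact herase_ne
    have hterm : ∀ a ∈ s.erase u,
        (if G.Adj a v then
            ((G.degree a : ℝ))⁻¹
              * ((G.degree a : ℝ) / (D - (G.degree u : ℝ)))
              * ((D - (G.degree u : ℝ)) / (((k : ℝ) - 2) * D))
          else 0)
        = if G.Adj a v then 1 / (((k : ℝ) - 2) * D) else 0 := by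
      intro a ha
      by_cases hav : G.Adj a v
      · simp only [hav, if_true]
        have hda : (0:ℝ) < (G.degree a : ℝ) := by
          exact_mod_cast hdeg a (Finset.mem_of_mem_erase ha)
        field_simp
      · simp [hav]
    rw [Finset.sum_congr rfl hterm, ← Finset.sum_filter]
    have hfilter : (s.erase u).filter (fun a => G.Adj a v)
        = G.neighborFinset v ∩ s.erase u := by
      ext a
      simp only [SimpleGraph.mem_neighborFinset, Finset.mem_filter, Finset.mem_inter]
      constructor
      · rintro ⟨h1, h2⟩; exact ⟨h2.symm, h1⟩
      · rintro ⟨h1, h2⟩; exact ⟨h2, h1.symm⟩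
    rw [hfilter, Finset.sum_const, nsmul_eq_mul, mul_one_div]
  refine ⟨hP, ?_⟩
  intro u hu v hpos
  rw [hP u hu v]
  have hc : ((G.neighborFinset v ∩ s.erase u).card : ℝ) ≠ 0 := by
    exact_mod_cast hpos.ne'
  field_simp
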